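/- Let u(x,y) = (y/π)∫_ℝ φ(t)/((t−x)²+y²) dt be the Poisson extension to the upper half-plane of an even, nonnegative, C¹ function φ increasing on (0,∞) with ∫_ℝ φ(t)/(t²+1) dt < ∞. Then for x ≥ 0, ∂u/∂x (x,y) = (4xy/π) ∫₀^∞ t φ'(t) / ([(t−x)²+y²][(t+x)²+y²]) dt ≥ 0; in particular x ↦ u(x,y) is nondecreasing on [0,∞). -/

import Mathlib

open Set Filter MeasureTheory Topology

-- kernel comparison: 1/((t-x)^2+y^2) ≤ C/(t^2+1) uniformly for |x| ≤ R
lemma aux_kernel_le {y R : ℝ} (hy : 0 < y) (hR : 0 ≤ R) {x : ℝ} (hx : |x| ≤ R) (t : ℝ) :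
    1 / ((t - x) ^ 2 + y ^ 2) ≤ (2 + (2 * R ^ 2 + 1) / y ^ 2) / (t ^ 2 + 1) := by
  have hx2 : x ^ 2 ≤ R ^ 2 := sq_le_sq' (neg_le_of_abs_le hx) (le_of_abs_le hx)
  have hy2 : 0 < y ^ 2 := by positivity
  have hA : 0 < (t - x) ^ 2 + y ^ 2 := by positivity
  have hB : (0:ℝ) < t ^ 2 + 1 := by positivity
  rw [div_le_div_iff₀ hA hB]
  have key : (2 + (2 * R ^ 2 + 1) / y ^ 2) * ((t - x) ^ 2 + y ^ 2)
      ≥ 2 * (t - x) ^ 2 + (2 * R ^ 2 + 1) := by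
    have h1 : (2 * R ^ 2 + 1) / y ^ 2 * y ^ 2 = 2 * R ^ 2 + 1 := by
      field_simp
    nlinarith [sq_nonneg (t - x), mul_pos (div_pos (by positivity : (0:ℝ) < 2 * R ^ 2 + 1) hy2) hy2]
  nlinarith [sq_nonneg (t - 2 * x)]

-- derivative kernel bound
lemma aux_dkernel_le {y R : ℝ} (hy : 0 < y) (hR : 0 ≤ R) {x : ℝ} (hx : |x| ≤ R) (t : ℝ) :
    |2 * (t - x)| / (((t - x) ^ 2 + y ^ 2) ^ 2)
      ≤ ((1 + 1 / y ^ 2) * (2 + (2 * R ^ 2 + 1) / y ^ 2)) / (t ^ 2 + 1) := by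
  have hA : 0 < (t - x) ^ 2 + y ^ 2 := by positivity
  have h1 : |2 * (t - x)| / (((t - x) ^ 2 + y ^ 2) ^ 2)
      ≤ (1 + 1 / y ^ 2) * (1 / ((t - x) ^ 2 + y ^ 2)) := by
    rw [div_le_iff₀ (by positivity)]
    have h2 : |2 * (t - x)| ≤ (1 + 1 / y ^ 2) * ((t - x) ^ 2 + y ^ 2) := by
      have := abs_le.mp (le_refl |2 * (t - x)|)
      rcases abs_cases (2 * (t - x)) with ⟨h, _⟩ | ⟨h, _⟩ <;> rw [h] <;>
        nlinarith [sq_nonneg (t - x - 1), sq_nonneg (t - x + 1), sq_nonneg (t - x),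
          div_pos one_pos (by positivity : (0:ℝ) < y ^ 2),
          mul_pos (div_pos one_pos (by positivity : (0:ℝ) < y ^ 2)) (by positivity : (0:ℝ) < y ^ 2),
          (div_mul_cancel₀ (1:ℝ) (ne_of_gt (by positivity : (0:ℝ) < y ^ 2)))]
    calc |2 * (t - x)| ≤ (1 + 1 / y ^ 2) * ((t - x) ^ 2 + y ^ 2) := h2
      _ = (1 + 1 / y ^ 2) * (1 / ((t - x) ^ 2 + y ^ 2)) * ((t - x) ^ 2 + y ^ 2) ^ 2 := by
          field_simp
  refine h1.trans ?_
  rw [mul_div_assoc]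
  exact mul_le_mul_of_nonneg_left (aux_kernel_le hy hR hx t) (by positivity)

lemma aux_tail_tendsto {f : ℝ → ℝ} (hf : Integrable f) :
    Tendsto (fun r : ℝ => ∫ t in Ioi r, f t) atTop (𝓝 0) := by
  have h := MeasureTheory.tendsto_integral_filter_of_dominated_convergence (μ := volume)
    (F := fun r : ℝ => (Ioi r).indicator f) (f := fun _ => (0:ℝ)) (bound := fun t => ‖f t‖)
    (l := atTop)
    (Eventually.of_forall fun r => hf.aestronglyMeasurable.indicator measurableSet_Ioi)
    (Eventually.of_forall fun r => Eventually.of_forall fun t => by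
      by_cases h : t ∈ Ioi r
      · simp [indicator_of_mem h]
      · simp [indicator_of_notMem h])
    hf.norm
    (Eventually.of_forall fun t => by
      apply Tendsto.congr' (f₁ := fun _ : ℝ => (0:ℝ))
      · filter_upwards [eventually_ge_atTop t] with r hr
        simp [indicator_of_notMem (by simpa using not_lt.mpr hr : t ∉ Ioi r)]
      · exact tendsto_const_nhds)
  simpa [integral_indicator measurableSet_Ioi] using h

lemma aux_phi_le {φ : ℝ → ℝ} (hφc : Continuous φ) (hnonneg : ∀ t, 0 ≤ φ t)
    (hmono : MonotoneOn φ (Ioi 0))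
    (hint : Integrable (fun t => φ t / (t ^ 2 + 1)))
    {t : ℝ} (ht : 1 ≤ t) :
    φ t ≤ 5 * t * ∫ s in Ioi t, φ s / (s ^ 2 + 1) := by
  have ht0 : 0 < t := lt_of_lt_of_le one_pos ht
  have hsub : Ioc t (2 * t) ⊆ Ioi t := Ioc_subset_Ioi_self
  -- step 1: constant lower bound on Ioc t (2t)
  have h1 : ∫ s in Ioc t (2 * t), φ t / (4 * t ^ 2 + 1)
      ≤ ∫ s in Ioc t (2 * t), φ s / (s ^ 2 + 1) := by
    apply setIntegral_mono_on
    · exact integrableOn_const measure_Ioc_lt_top.ne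
    · exact hint.integrableOn
    · exact measurableSet_Ioc
    · intro s hs
      have hs1 : t < s := hs.1
      have hs2 : s ≤ 2 * t := hs.2
      have hφ : φ t ≤ φ s := hmono (mem_Ioi.mpr ht0) (mem_Ioi.mpr (ht0.trans hs1)) hs1.le
      have hd : s ^ 2 + 1 ≤ 4 * t ^ 2 + 1 := by nlinarith
      calc φ t / (4 * t ^ 2 + 1) ≤ φ t / (s ^ 2 + 1) := by
            apply div_le_div_of_nonneg_left (hnonneg t) (by positivity) hd
        _ ≤ φ s / (s ^ 2 + 1) := by
            apply div_le_div_of_nonneg_right hφ (by positivity)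
  have h2 : ∫ s in Ioc t (2 * t), φ s / (s ^ 2 + 1) ≤ ∫ s in Ioi t, φ s / (s ^ 2 + 1) := by
    apply setIntegral_mono_set hint.integrableOn
    · exact Eventually.of_forall fun s => div_nonneg (hnonneg s) (by positivity)
    · exact HasSubset.Subset.eventuallyLE hsub
  have h3 : ∫ s in Ioc t (2 * t), φ t / (4 * t ^ 2 + 1) = t * (φ t / (4 * t ^ 2 + 1)) := by
    rw [setIntegral_const, Real.volume_real_Ioc, smul_eq_mul]
    congr 1
    rw [max_eq_left (by linarith)]
    ring
  have key : t * (φ t / (4 * t ^ 2 + 1)) ≤ ∫ s in Ioi t, φ s / (s ^ 2 + 1) := by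
    rw [← h3]; exact h1.trans h2
  have h5 : 4 * t ^ 2 + 1 ≤ 5 * t ^ 2 := by nlinarith
  have hT : 0 ≤ ∫ s in Ioi t, φ s / (s ^ 2 + 1) :=
    setIntegral_nonneg measurableSet_Ioi fun s _ => div_nonneg (hnonneg s) (by positivity)
  -- φ t ≤ (4t²+1)/t * T ≤ 5 t T
  have : φ t ≤ (4 * t ^ 2 + 1) / t * ∫ s in Ioi t, φ s / (s ^ 2 + 1) := by
    rw [div_mul_eq_mul_div, le_div_iff₀ ht0]
    calc φ t * t = (t * (φ t / (4 * t ^ 2 + 1))) * (4 * t ^ 2 + 1) := by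
          field_simp
      _ ≤ (∫ s in Ioi t, φ s / (s ^ 2 + 1)) * (4 * t ^ 2 + 1) := by
          apply mul_le_mul_of_nonneg_right key (by positivity)
      _ = (4 * t ^ 2 + 1) * ∫ s in Ioi t, φ s / (s ^ 2 + 1) := by ring
  refine this.trans ?_
  apply mul_le_mul_of_nonneg_right _ hT
  rw [div_le_iff₀ ht0]
  nlinarith

lemma aux_hd_x_minus {y : ℝ} (hy : 0 < y) (t x : ℝ) :
    HasDerivAt (fun x : ℝ => 1 / ((t - x) ^ 2 + y ^ 2))
      (2 * (t - x) / (((t - x) ^ 2 + y ^ 2) ^ 2)) x := by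
  have h0 : (t - x) ^ 2 + y ^ 2 ≠ 0 := by positivity
  have h1 : HasDerivAt (fun x : ℝ => (t - x) ^ 2 + y ^ 2) (2 * (t - x) ^ 1 * (-1)) x :=
    (((hasDerivAt_id x).const_sub t).pow 2).add_const _
  have h2 := h1.inv h0
  simp only [one_div]
  exact h2.congr_deriv (by ring)

lemma aux_hd_x_plus {y : ℝ} (hy : 0 < y) (t x : ℝ) :
    HasDerivAt (fun x : ℝ => 1 / ((t + x) ^ 2 + y ^ 2))
      (-(2 * (t + x)) / (((t + x) ^ 2 + y ^ 2) ^ 2)) x := by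
  have h0 : (t + x) ^ 2 + y ^ 2 ≠ 0 := by positivity
  have h1 : HasDerivAt (fun x : ℝ => (t + x) ^ 2 + y ^ 2) (2 * (t + x) ^ 1 * 1) x :=
    (((hasDerivAt_id x).const_add t).pow 2).add_const _
  have h2 := h1.inv h0
  simp only [one_div]
  exact h2.congr_deriv (by ring)

lemma aux_hd_t_minus {y : ℝ} (hy : 0 < y) (x t : ℝ) :
    HasDerivAt (fun t : ℝ => 1 / ((t - x) ^ 2 + y ^ 2))
      (-(2 * (t - x)) / (((t - x) ^ 2 + y ^ 2) ^ 2)) t := by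
  have h0 : (t - x) ^ 2 + y ^ 2 ≠ 0 := by positivity
  have h1 : HasDerivAt (fun t : ℝ => (t - x) ^ 2 + y ^ 2) (2 * (t - x) ^ 1 * 1) t :=
    (((hasDerivAt_id t).sub_const x).pow 2).add_const _
  have h2 := h1.inv h0
  simp only [one_div]
  exact h2.congr_deriv (by ring)

lemma aux_hd_t_plus {y : ℝ} (hy : 0 < y) (x t : ℝ) :
    HasDerivAt (fun t : ℝ => 1 / ((t + x) ^ 2 + y ^ 2))
      (-(2 * (t + x)) / (((t + x) ^ 2 + y ^ 2) ^ 2)) t := by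
  have h0 : (t + x) ^ 2 + y ^ 2 ≠ 0 := by positivity
  have h1 : HasDerivAt (fun t : ℝ => (t + x) ^ 2 + y ^ 2) (2 * (t + x) ^ 1 * 1) t :=
    (((hasDerivAt_id t).add_const x).pow 2).add_const _
  have h2 := h1.inv h0
  simp only [one_div]
  exact h2.congr_deriv (by ring)

lemma aux_deriv_nonneg {φ φ' : ℝ → ℝ} (hderiv : ∀ t : ℝ, HasDerivAt φ (φ' t) t)
    (hmono : MonotoneOn φ (Ioi 0)) {t : ℝ} (ht : 0 < t) : 0 ≤ φ' t := by
  have h := (hasDerivAt_iff_tendsto_slope.mp (hderiv t)).mono_left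
    (nhdsWithin_mono t (by intro s hs; exact ne_of_gt hs : Ioi t ⊆ {t}ᶜ))
  refine ge_of_tendsto h ?_
  filter_upwards [self_mem_nhdsWithin] with s hs
  have hst : t < s := hs
  have : φ t ≤ φ s := hmono (mem_Ioi.mpr ht) (mem_Ioi.mpr (ht.trans hst)) hst.le
  rw [slope_def_field]
  exact div_nonneg (by linarith) (by linarith)

-- integrability of the kernel integral over ℝ
lemma aux_integrable_kernel {φ : ℝ → ℝ} {y : ℝ} (hy : 0 < y)
    (hφc : Continuous φ) (hnonneg : ∀ t, 0 ≤ φ t)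
    (hint : Integrable (fun t => φ t / (t ^ 2 + 1))) (x : ℝ) :
    Integrable (fun t => φ t / ((t - x) ^ 2 + y ^ 2)) := by
  set C : ℝ := 2 + (2 * |x| ^ 2 + 1) / y ^ 2 with hC
  refine (hint.const_mul C).mono' ?_ ?_
  · exact (hφc.div (by continuity) (fun t => by positivity)).aestronglyMeasurable
  · refine Eventually.of_forall fun t => ?_
    have hA : (0:ℝ) < (t - x) ^ 2 + y ^ 2 := by positivity
    rw [Real.norm_eq_abs, abs_of_nonneg (div_nonneg (hnonneg t) hA.le)]
    have h := aux_kernel_le hy (abs_nonneg x) (le_refl |x|) t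
    calc φ t / ((t - x) ^ 2 + y ^ 2) = φ t * (1 / ((t - x) ^ 2 + y ^ 2)) := by ring
      _ ≤ φ t * (C / (t ^ 2 + 1)) := mul_le_mul_of_nonneg_left h (hnonneg t)
      _ = C * (φ t / (t ^ 2 + 1)) := by ring

lemma aux_integrable_kernel' {φ : ℝ → ℝ} {y : ℝ} (hy : 0 < y)
    (hφc : Continuous φ) (hnonneg : ∀ t, 0 ≤ φ t)
    (hint : Integrable (fun t => φ t / (t ^ 2 + 1))) (x : ℝ) :
    Integrable (fun t => φ t / ((t + x) ^ 2 + y ^ 2)) := by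
  have := aux_integrable_kernel hy hφc hnonneg hint (-x)
  simpa [sub_neg_eq_add] using this

-- even split
lemma aux_even_split {φ : ℝ → ℝ} {y : ℝ} (hy : 0 < y)
    (heven : ∀ t : ℝ, φ (-t) = φ t)
    (hφc : Continuous φ) (hnonneg : ∀ t, 0 ≤ φ t)
    (hint : Integrable (fun t => φ t / (t ^ 2 + 1))) (x : ℝ) :
    (∫ t : ℝ, φ t / ((t - x) ^ 2 + y ^ 2))
      = ∫ t in Ioi (0:ℝ),
          (φ t * (1 / ((t - x) ^ 2 + y ^ 2)) + φ t * (1 / ((t + x) ^ 2 + y ^ 2))) := by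
  have hk := aux_integrable_kernel hy hφc hnonneg hint x
  have hk' := aux_integrable_kernel' hy hφc hnonneg hint x
  have hsplit := intervalIntegral.integral_Iic_add_Ioi (b := (0:ℝ)) hk.integrableOn hk.integrableOn
  have hneg : (∫ t in Iic (0:ℝ), φ t / ((t - x) ^ 2 + y ^ 2))
      = ∫ t in Ioi (0:ℝ), φ t / ((t + x) ^ 2 + y ^ 2) := by
    rw [show Iic (0:ℝ) = Iic (-(0:ℝ)) by norm_num,
      ← integral_comp_neg_Ioi (0:ℝ) (fun t => φ t / ((t - x) ^ 2 + y ^ 2))]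
    congr 1
    funext t
    rw [heven t]
    congr 2
    ring
  rw [← hsplit, hneg]
  rw [← integral_add hk'.integrableOn hk.integrableOn]
  congr 1
  funext t
  ring

lemma aux_F'_bound {φ : ℝ → ℝ} {y R : ℝ} (hy : 0 < y) (hR : 0 ≤ R)
    (hnonneg : ∀ t, 0 ≤ φ t) {x : ℝ} (hx : |x| ≤ R) (t : ℝ) :
    ‖φ t * (2 * (t - x) / (((t - x) ^ 2 + y ^ 2) ^ 2))
        + φ t * (-(2 * (t + x)) / (((t + x) ^ 2 + y ^ 2) ^ 2))‖
      ≤ φ t * (2 * ((1 + 1 / y ^ 2) * (2 + (2 * R ^ 2 + 1) / y ^ 2)) / (t ^ 2 + 1)) := by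
  set C2 : ℝ := (1 + 1 / y ^ 2) * (2 + (2 * R ^ 2 + 1) / y ^ 2) with hC2
  have hA : (0:ℝ) < (t - x) ^ 2 + y ^ 2 := by positivity
  have hB : (0:ℝ) < (t + x) ^ 2 + y ^ 2 := by positivity
  have h1 : |2 * (t - x) / (((t - x) ^ 2 + y ^ 2) ^ 2)| ≤ C2 / (t ^ 2 + 1) := by
    rw [abs_div, abs_of_pos (by positivity : (0:ℝ) < ((t - x) ^ 2 + y ^ 2) ^ 2)]
    exact aux_dkernel_le hy hR hx t
  have h2 : |(-(2 * (t + x))) / (((t + x) ^ 2 + y ^ 2) ^ 2)| ≤ C2 / (t ^ 2 + 1) := by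
    rw [abs_div, abs_of_pos (by positivity : (0:ℝ) < ((t + x) ^ 2 + y ^ 2) ^ 2), abs_neg]
    have hx' : |(-x)| ≤ R := by rwa [abs_neg]
    have := aux_dkernel_le hy hR hx' t
    simpa only [sub_neg_eq_add] using this
  calc ‖φ t * (2 * (t - x) / (((t - x) ^ 2 + y ^ 2) ^ 2))
        + φ t * (-(2 * (t + x)) / (((t + x) ^ 2 + y ^ 2) ^ 2))‖
      ≤ ‖φ t * (2 * (t - x) / (((t - x) ^ 2 + y ^ 2) ^ 2))‖
        + ‖φ t * (-(2 * (t + x)) / (((t + x) ^ 2 + y ^ 2) ^ 2))‖ := norm_add_le _ _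
    _ = φ t * |2 * (t - x) / (((t - x) ^ 2 + y ^ 2) ^ 2)|
        + φ t * |(-(2 * (t + x))) / (((t + x) ^ 2 + y ^ 2) ^ 2)| := by
        rw [Real.norm_eq_abs, Real.norm_eq_abs, abs_mul, abs_mul,
          abs_of_nonneg (hnonneg t)]
    _ ≤ φ t * (C2 / (t ^ 2 + 1)) + φ t * (C2 / (t ^ 2 + 1)) :=
        add_le_add (mul_le_mul_of_nonneg_left h1 (hnonneg t))
          (mul_le_mul_of_nonneg_left h2 (hnonneg t))
    _ = φ t * (2 * C2 / (t ^ 2 + 1)) := by ring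

lemma aux_bound_integrable {φ : ℝ → ℝ} (hint : Integrable (fun t => φ t / (t ^ 2 + 1)))
    (c : ℝ) : Integrable (fun t => φ t * (c / (t ^ 2 + 1))) := by
  refine (hint.const_mul c).congr (Eventually.of_forall fun t => ?_)
  ring

lemma aux_F'_integrableOn {φ : ℝ → ℝ} {y : ℝ} (hy : 0 < y)
    (hφc : Continuous φ) (hnonneg : ∀ t, 0 ≤ φ t)
    (hint : Integrable (fun t => φ t / (t ^ 2 + 1))) (x : ℝ) (s : Set ℝ) :
    IntegrableOn (fun t => φ t * (2 * (t - x) / (((t - x) ^ 2 + y ^ 2) ^ 2))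
        + φ t * (-(2 * (t + x)) / (((t + x) ^ 2 + y ^ 2) ^ 2))) s := by
  have hbi := (aux_bound_integrable hint
    (2 * ((1 + 1 / y ^ 2) * (2 + (2 * |x| ^ 2 + 1) / y ^ 2)))).integrableOn (s := s)
  refine hbi.mono' ?_ (Eventually.of_forall fun t =>
    aux_F'_bound hy (abs_nonneg x) hnonneg (le_refl |x|) t)
  apply Continuous.aestronglyMeasurable
  apply Continuous.add
  · exact hφc.mul ((by continuity : Continuous fun t : ℝ => 2 * (t - x)).div
      (by continuity) (fun t => by positivity))
  · exact hφc.mul ((by continuity : Continuous fun t : ℝ => -(2 * (t + x))).div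
      (by continuity) (fun t => by positivity))

lemma aux_kernel_cont {y : ℝ} (hy : 0 < y) (x : ℝ) :
    Continuous fun t : ℝ => 1 / ((t - x) ^ 2 + y ^ 2) :=
  continuous_const.div (by continuity) (fun t => by positivity)

lemma aux_kernel_cont' {y : ℝ} (hy : 0 < y) (x : ℝ) :
    Continuous fun t : ℝ => 1 / ((t + x) ^ 2 + y ^ 2) :=
  continuous_const.div (by continuity) (fun t => by positivity)

lemma aux_stepB {φ : ℝ → ℝ} {y : ℝ} (hy : 0 < y)
    (hφc : Continuous φ) (hnonneg : ∀ t, 0 ≤ φ t)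
    (hint : Integrable (fun t => φ t / (t ^ 2 + 1))) (x₀ : ℝ) :
    HasDerivAt
      (fun x => ∫ t in Ioi (0:ℝ),
        (φ t * (1 / ((t - x) ^ 2 + y ^ 2)) + φ t * (1 / ((t + x) ^ 2 + y ^ 2))))
      (∫ t in Ioi (0:ℝ),
        (φ t * (2 * (t - x₀) / (((t - x₀) ^ 2 + y ^ 2) ^ 2))
          + φ t * (-(2 * (t + x₀)) / (((t + x₀) ^ 2 + y ^ 2) ^ 2)))) x₀ := by
  set R : ℝ := |x₀| + 1 with hRdef
  have hR : 0 ≤ R := by positivity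
  set C2 : ℝ := (1 + 1 / y ^ 2) * (2 + (2 * R ^ 2 + 1) / y ^ 2) with hC2
  have h := hasDerivAt_integral_of_dominated_loc_of_deriv_le (μ := volume.restrict (Ioi 0))
    (F := fun x t => φ t * (1 / ((t - x) ^ 2 + y ^ 2)) + φ t * (1 / ((t + x) ^ 2 + y ^ 2)))
    (F' := fun x t => φ t * (2 * (t - x) / (((t - x) ^ 2 + y ^ 2) ^ 2))
          + φ t * (-(2 * (t + x)) / (((t + x) ^ 2 + y ^ 2) ^ 2)))
    (x₀ := x₀) (s := Metric.ball x₀ 1) (bound := fun t => φ t * (2 * C2 / (t ^ 2 + 1)))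
    (Metric.ball_mem_nhds x₀ one_pos)
    (Eventually.of_forall fun x =>
      (((hφc.mul (aux_kernel_cont hy x)).add
        (hφc.mul (aux_kernel_cont' hy x))).aestronglyMeasurable))
    ?_ ?_ ?_ ?_ ?_
  · exact h.2
  · -- integrability of F x₀
    refine (((aux_integrable_kernel hy hφc hnonneg hint x₀).add
      (aux_integrable_kernel' hy hφc hnonneg hint x₀)).congr
      (Eventually.of_forall fun t => by simp [mul_one_div, div_eq_mul_inv])).integrableOn
  · exact (aux_F'_integrableOn hy hφc hnonneg hint x₀ (Ioi 0)).aestronglyMeasurable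
  · refine Eventually.of_forall fun t => fun x hx => ?_
    have hxR : |x| ≤ R := by
      have h1 : |x - x₀| < 1 := by simpa [Real.dist_eq] using hx
      have h2 : |x| - |x₀| ≤ |x - x₀| := abs_sub_abs_le_abs_sub x x₀
      rw [hRdef]; linarith
    exact aux_F'_bound hy hR hnonneg hxR t
  · exact (aux_bound_integrable hint (2 * C2)).integrableOn
  · refine Eventually.of_forall fun t => fun x hx => ?_
    exact ((aux_hd_x_minus hy t x).const_mul (φ t)).add
      ((aux_hd_x_plus hy t x).const_mul (φ t))

lemma aux_tendsto {φ : ℝ → ℝ} {y x : ℝ} (hy : 0 < y) (hx : 0 ≤ x)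
    (hφc : Continuous φ) (hnonneg : ∀ t, 0 ≤ φ t)
    (hmono : MonotoneOn φ (Ioi 0))
    (hint : Integrable (fun t => φ t / (t ^ 2 + 1))) :
    Tendsto (fun t => φ t * (1 / ((t - x) ^ 2 + y ^ 2) - 1 / ((t + x) ^ 2 + y ^ 2)))
      atTop (𝓝 0) := by
  apply squeeze_zero'
  · filter_upwards [eventually_ge_atTop (0:ℝ)] with t ht
    have hA : (0:ℝ) < (t - x) ^ 2 + y ^ 2 := by positivity
    have hAB : (t - x) ^ 2 + y ^ 2 ≤ (t + x) ^ 2 + y ^ 2 := by nlinarith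
    exact mul_nonneg (hnonneg t) (sub_nonneg.mpr (one_div_le_one_div_of_le hA hAB))
  · filter_upwards [eventually_ge_atTop (1:ℝ), eventually_ge_atTop (2 * x + 2)] with t h1 h2
    have ht0 : 0 < t := lt_of_lt_of_le one_pos h1
    have hA : (0:ℝ) < (t - x) ^ 2 + y ^ 2 := by positivity
    have hB : (0:ℝ) < (t + x) ^ 2 + y ^ 2 := by positivity
    set T : ℝ := ∫ s in Ioi t, φ s / (s ^ 2 + 1) with hT
    have hTnn : 0 ≤ T := setIntegral_nonneg measurableSet_Ioi
      fun s _ => div_nonneg (hnonneg s) (by positivity)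
    have hident : 1 / ((t - x) ^ 2 + y ^ 2) - 1 / ((t + x) ^ 2 + y ^ 2)
        = 4 * t * x / (((t - x) ^ 2 + y ^ 2) * ((t + x) ^ 2 + y ^ 2)) := by
      field_simp
      ring
    have hA4 : t ^ 2 / 4 ≤ (t - x) ^ 2 + y ^ 2 := by nlinarith [sq_nonneg y]
    have hB4 : t ^ 2 ≤ (t + x) ^ 2 + y ^ 2 := by nlinarith [sq_nonneg y]
    have hABprod : t ^ 2 / 4 * t ^ 2 ≤ ((t - x) ^ 2 + y ^ 2) * ((t + x) ^ 2 + y ^ 2) :=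
      mul_le_mul hA4 hB4 (by positivity) hA.le
    have hq : 4 * t * x / (((t - x) ^ 2 + y ^ 2) * ((t + x) ^ 2 + y ^ 2)) ≤ 16 * x / t ^ 2 := by
      rw [div_le_div_iff₀ (by positivity) (by positivity)]
      nlinarith [mul_le_mul_of_nonneg_left hABprod (by positivity : (0:ℝ) ≤ 16 * x),
        mul_nonneg (mul_nonneg hx (pow_nonneg ht0.le 3)) (sub_nonneg.mpr h1)]
    have hphi := aux_phi_le hφc hnonneg hmono hint h1
    calc φ t * (1 / ((t - x) ^ 2 + y ^ 2) - 1 / ((t + x) ^ 2 + y ^ 2))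
        = φ t * (4 * t * x / (((t - x) ^ 2 + y ^ 2) * ((t + x) ^ 2 + y ^ 2))) := by
          rw [hident]
      _ ≤ (5 * t * T) * (16 * x / t ^ 2) := by
          apply mul_le_mul hphi hq (by positivity) (by positivity)
      _ = 80 * x * T / t := by field_simp; ring
      _ ≤ 80 * x * T := div_le_self (by positivity) h1
  · have := (aux_tail_tendsto hint).const_mul (80 * x)
    simpa using this

lemma aux_stepC {φ φ' : ℝ → ℝ} {y x : ℝ} (hy : 0 < y) (hx : 0 ≤ x)
    (hderiv : ∀ t : ℝ, HasDerivAt φ (φ' t) t)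
    (hφ'c : Continuous φ')
    (hnonneg : ∀ t, 0 ≤ φ t)
    (hmono : MonotoneOn φ (Ioi 0))
    (hint : Integrable (fun t => φ t / (t ^ 2 + 1)))
    (hintg : IntegrableOn
      (fun t => t * φ' t / (((t - x) ^ 2 + y ^ 2) * ((t + x) ^ 2 + y ^ 2))) (Ioi 0)) :
    (∫ t in Ioi (0:ℝ),
        (φ t * (2 * (t - x) / (((t - x) ^ 2 + y ^ 2) ^ 2))
          + φ t * (-(2 * (t + x)) / (((t + x) ^ 2 + y ^ 2) ^ 2))))
      = 4 * x * ∫ t in Ioi (0:ℝ),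
          t * φ' t / (((t - x) ^ 2 + y ^ 2) * ((t + x) ^ 2 + y ^ 2)) := by
  have hφc : Continuous φ :=
    continuous_iff_continuousAt.mpr fun t => (hderiv t).differentiableAt.continuousAt
  set G : ℝ → ℝ := fun t => φ' t * (1 / ((t - x) ^ 2 + y ^ 2) - 1 / ((t + x) ^ 2 + y ^ 2))
    with hG
  set F' : ℝ → ℝ := fun t => φ t * (2 * (t - x) / (((t - x) ^ 2 + y ^ 2) ^ 2))
          + φ t * (-(2 * (t + x)) / (((t + x) ^ 2 + y ^ 2) ^ 2)) with hF'
  have hGid : ∀ t : ℝ, G t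
      = 4 * x * (t * φ' t / (((t - x) ^ 2 + y ^ 2) * ((t + x) ^ 2 + y ^ 2))) := by
    intro t
    have hA : (0:ℝ) < (t - x) ^ 2 + y ^ 2 := by positivity
    have hB : (0:ℝ) < (t + x) ^ 2 + y ^ 2 := by positivity
    rw [hG]
    field_simp
    ring
  have hGint : IntegrableOn G (Ioi 0) :=
    (hintg.const_mul (4 * x)).congr (Eventually.of_forall fun t => (hGid t).symm)
  have hF'int : IntegrableOn F' (Ioi 0) := aux_F'_integrableOn hy hφc hnonneg hint x (Ioi 0)
  -- h and its derivative
  set h : ℝ → ℝ := fun t => φ t * (1 / ((t - x) ^ 2 + y ^ 2) - 1 / ((t + x) ^ 2 + y ^ 2))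
    with hh
  have hhd : ∀ t : ℝ, HasDerivAt h (G t - F' t) t := by
    intro t
    have hd := (hderiv t).mul ((aux_hd_t_minus hy x t).sub (aux_hd_t_plus hy x t))
    have : φ' t * (1 / ((t - x) ^ 2 + y ^ 2) - 1 / ((t + x) ^ 2 + y ^ 2))
        + φ t * (-(2 * (t - x)) / (((t - x) ^ 2 + y ^ 2) ^ 2)
          - -(2 * (t + x)) / (((t + x) ^ 2 + y ^ 2) ^ 2)) = G t - F' t := by
      rw [hG, hF']
      ring
    rw [← this]; exact hd
  have hparts := integral_Ioi_of_hasDerivAt_of_tendsto (a := (0:ℝ)) (f := h)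
    (f' := fun t => G t - F' t) (m := 0)
    ((hhd 0).continuousAt.continuousWithinAt)
    (fun t _ => hhd t)
    (hGint.sub hF'int)
    (aux_tendsto hy hx hφc hnonneg hmono hint)
  have hh0 : h 0 = 0 := by
    have he : ((0:ℝ) - x) ^ 2 = ((0:ℝ) + x) ^ 2 := by ring
    rw [hh]
    beta_reduce
    rw [he]
    ring
  rw [hh0, sub_zero] at hparts
  have hparts' : (∫ t in Ioi (0:ℝ), G t) - ∫ t in Ioi (0:ℝ), F' t = 0 := by
    rw [← integral_sub hGint hF'int]
    exact hparts
  have hGval : ∫ t in Ioi (0:ℝ), G t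
      = 4 * x * ∫ t in Ioi (0:ℝ),
          t * φ' t / (((t - x) ^ 2 + y ^ 2) * ((t + x) ^ 2 + y ^ 2)) := by
    rw [← MeasureTheory.integral_const_mul]
    exact setIntegral_congr_fun measurableSet_Ioi fun t _ => hGid t
  have heq : ∫ t in Ioi (0:ℝ), F' t = ∫ t in Ioi (0:ℝ), G t := by linarith
  exact heq.trans hGval

theorem stmt8 (φ φ' : ℝ → ℝ)
    (heven : ∀ t : ℝ, φ (-t) = φ t)
    (hderiv : ∀ t : ℝ, HasDerivAt φ (φ' t) t)
    (hcont : Continuous φ')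
    (hnonneg : ∀ t : ℝ, 0 ≤ φ t)
    (hmono : MonotoneOn φ (Ioi 0))
    (hint : Integrable (fun t => φ t / (t ^ 2 + 1)))
    (hint' : ∀ x ≥ (0:ℝ), ∀ y > (0:ℝ),
      IntegrableOn
        (fun t => t * φ' t / (((t - x) ^ 2 + y ^ 2) * ((t + x) ^ 2 + y ^ 2))) (Ioi 0))
    (u : ℝ → ℝ → ℝ)
    (hu : ∀ x : ℝ, ∀ y > (0:ℝ),
      u x y = (y / Real.pi) * ∫ t : ℝ, φ t / ((t - x) ^ 2 + y ^ 2)) :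
    ∀ y > (0:ℝ),
      (∀ x ≥ (0:ℝ),
        HasDerivAt (fun x' => u x' y)
          ((4 * x * y / Real.pi) * ∫ t in Ioi (0:ℝ),
            t * φ' t / (((t - x) ^ 2 + y ^ 2) * ((t + x) ^ 2 + y ^ 2))) x ∧
        0 ≤ (4 * x * y / Real.pi) * ∫ t in Ioi (0:ℝ),
            t * φ' t / (((t - x) ^ 2 + y ^ 2) * ((t + x) ^ 2 + y ^ 2))) ∧
      MonotoneOn (fun x => u x y) (Ici 0) := by
  intro y hy
  have hφc : Continuous φ :=
    continuous_iff_continuousAt.mpr fun t => (hderiv t).differentiableAt.continuousAt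
  have key : ∀ x ≥ (0:ℝ),
      HasDerivAt (fun x' => u x' y)
        ((4 * x * y / Real.pi) * ∫ t in Ioi (0:ℝ),
          t * φ' t / (((t - x) ^ 2 + y ^ 2) * ((t + x) ^ 2 + y ^ 2))) x ∧
      0 ≤ (4 * x * y / Real.pi) * ∫ t in Ioi (0:ℝ),
          t * φ' t / (((t - x) ^ 2 + y ^ 2) * ((t + x) ^ 2 + y ^ 2)) := by
    intro x hx
    have hrw : (fun x' => u x' y) = fun x' => (y / Real.pi) *
        ∫ t in Ioi (0:ℝ),
          (φ t * (1 / ((t - x') ^ 2 + y ^ 2)) + φ t * (1 / ((t + x') ^ 2 + y ^ 2))) := by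
      funext x'
      rw [hu x' y hy, aux_even_split hy heven hφc hnonneg hint x']
    have hB := aux_stepB hy hφc hnonneg hint x
    have hC := aux_stepC hy hx hderiv hcont hnonneg hmono hint (hint' x hx y hy)
    constructor
    · have h2 := hB.const_mul (y / Real.pi)
      rw [hC] at h2
      have h3 : (y / Real.pi) * (4 * x * ∫ t in Ioi (0:ℝ),
            t * φ' t / (((t - x) ^ 2 + y ^ 2) * ((t + x) ^ 2 + y ^ 2)))
          = (4 * x * y / Real.pi) * ∫ t in Ioi (0:ℝ),
            t * φ' t / (((t - x) ^ 2 + y ^ 2) * ((t + x) ^ 2 + y ^ 2)) := by ring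
      rw [h3] at h2
      rw [hrw]
      exact h2
    · apply mul_nonneg
      · apply div_nonneg _ Real.pi_pos.le
        positivity
      · refine setIntegral_nonneg measurableSet_Ioi fun t ht => ?_
        have ht0 : 0 < t := ht
        have hφ' : 0 ≤ φ' t := aux_deriv_nonneg hderiv hmono ht0
        have : (0:ℝ) < ((t - x) ^ 2 + y ^ 2) * ((t + x) ^ 2 + y ^ 2) := by positivity
        exact div_nonneg (mul_nonneg ht0.le hφ') this.le
  refine ⟨key, ?_⟩
  apply monotoneOn_of_deriv_nonneg (convex_Ici 0)
  · exact fun x hx => ((key x hx).1.continuousAt.continuousWithinAt)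
  · intro x hx
    rw [interior_Ici] at hx
    exact ((key x (le_of_lt hx)).1.differentiableAt.differentiableWithinAt)
  · intro x hx
    rw [interior_Ici] at hx
    rw [(key x hx.le).1.deriv]
    exact (key x hx.le).2
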